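/- Let N > 1 and h be real numbers, let g : [1, N] → ℝ be continuously differentiable, ε : [1, N] → ℝ arbitrary, and φ : [1, N] → ℂ continuous. Suppose that for every n ∈ [1, N]: ε(n)·φ(n) = (1/2)·g(n)·∫_{1}^{n} φ(m) dm + (1/2)·∫_{n}^{N} g(m)·φ(m) dm + (i·h/2)·∫_{1}^{N} sign(n − m)·φ(m) dm. Then the function n ↦ ε(n)·φ(n) is differentiable on (1, N) and its derivative at n equals i·h·φ(n) + (1/2)·g′(n)·∫_{1}^{n} φ(m) dm. -/

import Mathlib

open Complex intervalIntegral MeasureTheory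

/-- Continuum limit of the zero-energy Schrödinger equation of the `RD₊` model:
the integral equation implies that `n ↦ ε(n)φ(n)` is differentiable on `(1,N)` with
derivative `ihφ(n) + (1/2) g'(n) ∫₁ⁿ φ`. -/
theorem RDplus_integrodifferential
    (N : ℝ) (hN : 1 < N) (h : ℝ)
    (g g' : ℝ → ℝ)
    (hg : ∀ n ∈ Set.Icc (1 : ℝ) N, HasDerivAt g (g' n) n)
    (hg' : ContinuousOn g' (Set.Icc 1 N))
    (ε : ℝ → ℝ)
    (φ : ℝ → ℂ) (hφ : ContinuousOn φ (Set.Icc 1 N))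
    (heq : ∀ n ∈ Set.Icc (1 : ℝ) N,
      (ε n : ℂ) * φ n =
        (1 / 2 : ℂ) * (g n : ℂ) * (∫ m in (1 : ℝ)..n, φ m) +
        (1 / 2 : ℂ) * (∫ m in n..N, (g m : ℂ) * φ m) +
        (Complex.I * (h : ℂ) / 2) * (∫ m in (1 : ℝ)..N, (Real.sign (n - m) : ℂ) * φ m)) :
    ∀ n ∈ Set.Ioo (1 : ℝ) N,
      HasDerivAt (fun x : ℝ => (ε x : ℂ) * φ x)
        (Complex.I * (h : ℂ) * φ n + (1 / 2 : ℂ) * (g' n : ℂ) * (∫ m in (1 : ℝ)..n, φ m))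
        n := by
  intro n hn
  obtain ⟨hn1, hnN⟩ := hn
  have hnIcc : n ∈ Set.Icc (1:ℝ) N := ⟨hn1.le, hnN.le⟩
  have hφIoo : ContinuousOn φ (Set.Ioo (1:ℝ) N) := hφ.mono Set.Ioo_subset_Icc_self
  have hφc : ContinuousAt φ n := hφ.continuousAt (Icc_mem_nhds hn1 hnN)
  have hgφ : ContinuousOn (fun m => (g m : ℂ) * φ m) (Set.Icc 1 N) := by
    apply ContinuousOn.mul _ hφ
    exact Complex.continuous_ofReal.comp_continuousOn
      (fun x hx => (hg x hx).continuousAt.continuousWithinAt)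
  have hgφc : ContinuousAt (fun m => (g m : ℂ) * φ m) n :=
    hgφ.continuousAt (Icc_mem_nhds hn1 hnN)
  -- integrabilities
  have hIφ1n : IntervalIntegrable φ volume 1 n :=
    (hφ.mono (by rw [Set.uIcc_of_le hn1.le]; exact Set.Icc_subset_Icc le_rfl hnN.le)).intervalIntegrable
  have hIφnN : IntervalIntegrable φ volume n N :=
    (hφ.mono (by rw [Set.uIcc_of_le hnN.le]; exact Set.Icc_subset_Icc hn1.le le_rfl)).intervalIntegrable
  have hIgφ : IntervalIntegrable (fun m => (g m : ℂ) * φ m) volume n N :=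
    (hgφ.mono (by rw [Set.uIcc_of_le hnN.le]; exact Set.Icc_subset_Icc hn1.le le_rfl)).intervalIntegrable
  have hmeasφ : StronglyMeasurableAtFilter φ (nhds n) volume :=
    hφIoo.stronglyMeasurableAtFilter isOpen_Ioo n ⟨hn1, hnN⟩
  have hmeasgφ : StronglyMeasurableAtFilter (fun m => (g m : ℂ) * φ m) (nhds n) volume :=
    (hgφ.mono Set.Ioo_subset_Icc_self).stronglyMeasurableAtFilter isOpen_Ioo n ⟨hn1, hnN⟩
  -- derivatives of the pieces
  have hF : HasDerivAt (fun x => ∫ m in (1:ℝ)..x, φ m) (φ n) n :=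
    intervalIntegral.integral_hasDerivAt_right hIφ1n hmeasφ hφc
  have hG : HasDerivAt (fun x => ∫ m in x..N, (g m : ℂ) * φ m) (-((g n : ℂ) * φ n)) n :=
    intervalIntegral.integral_hasDerivAt_left hIgφ hmeasgφ hgφc
  have hT : HasDerivAt (fun x => ∫ m in x..N, φ m) (-(φ n)) n :=
    intervalIntegral.integral_hasDerivAt_left hIφnN hmeasφ hφc
  have hgC : HasDerivAt (fun x => ((g x : ℝ) : ℂ)) ((g' n : ℂ)) n :=
    (hg n hnIcc).ofReal_comp
  -- the reformulated RHS and its derivative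
  have hr : HasDerivAt (fun x =>
      (1 / 2 : ℂ) * (g x : ℂ) * (∫ m in (1 : ℝ)..x, φ m) +
      (1 / 2 : ℂ) * (∫ m in x..N, (g m : ℂ) * φ m) +
      (Complex.I * (h : ℂ) / 2) *
        ((∫ m in (1 : ℝ)..x, φ m) - (∫ m in x..N, φ m)))
      (Complex.I * (h : ℂ) * φ n + (1 / 2 : ℂ) * (g' n : ℂ) * (∫ m in (1 : ℝ)..n, φ m)) n := by
    have := (((hgC.mul hF).const_mul ((1:ℂ)/2)).add (hG.const_mul ((1:ℂ)/2))).add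
      ((hF.sub hT).const_mul (Complex.I * (h : ℂ) / 2))
    refine (this.congr_deriv (by ring)).congr_of_eventuallyEq ?_
    filter_upwards with x
    simp only [Pi.add_apply, Pi.mul_apply, Pi.sub_apply]
    ring
  -- eventual equality with ε·φ
  apply hr.congr_of_eventuallyEq
  filter_upwards [Ioo_mem_nhds hn1 hnN] with x hx
  have hxIcc : x ∈ Set.Icc (1:ℝ) N := Set.Ioo_subset_Icc_self hx
  rw [heq x hxIcc]
  congr 1
  congr 1
  -- the sign integral
  have hsign : (∫ m in (1 : ℝ)..N, (Real.sign (x - m) : ℂ) * φ m)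
      = (∫ m in (1 : ℝ)..x, φ m) - (∫ m in x..N, φ m) := by
    have hae1 : ∀ᵐ m ∂(volume : MeasureTheory.Measure ℝ), m ∈ Set.uIoc (1:ℝ) x →
        (Real.sign (x - m) : ℂ) * φ m = φ m := by
      have hne : ∀ᵐ m ∂(volume : MeasureTheory.Measure ℝ), m ≠ x := by
        rw [MeasureTheory.ae_iff]
        simpa using Real.volume_singleton (a := x)
      filter_upwards [hne] with m hm hm2
      rw [Set.uIoc_of_le hx.1.le] at hm2
      have : (0:ℝ) < x - m := sub_pos.2 (lt_of_le_of_ne hm2.2 hm)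
      rw [Real.sign_of_pos this]; simp
    have hae2 : ∀ᵐ m ∂(volume : MeasureTheory.Measure ℝ), m ∈ Set.uIoc x N →
        (Real.sign (x - m) : ℂ) * φ m = -φ m := by
      filter_upwards with m hm2
      rw [Set.uIoc_of_le hx.2.le] at hm2
      have : x - m < 0 := sub_neg.2 hm2.1
      rw [Real.sign_of_neg this]; simp
    have hIφ1x : IntervalIntegrable φ volume 1 x :=
      (hφ.mono (by rw [Set.uIcc_of_le hx.1.le]; exact Set.Icc_subset_Icc le_rfl hx.2.le)).intervalIntegrable
    have hIφxN : IntervalIntegrable φ volume x N :=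
      (hφ.mono (by rw [Set.uIcc_of_le hx.2.le]; exact Set.Icc_subset_Icc hx.1.le le_rfl)).intervalIntegrable
    have hI1 : IntervalIntegrable (fun m => (Real.sign (x - m) : ℂ) * φ m) volume 1 x := by
      rw [intervalIntegrable_iff] at hIφ1x ⊢
      have e1 : (fun m => (Real.sign (x - m) : ℂ) * φ m) =ᵐ[volume.restrict (Set.uIoc (1:ℝ) x)] φ :=
        (MeasureTheory.ae_restrict_iff' measurableSet_uIoc).2 hae1
      exact hIφ1x.congr e1.symm
    have hI2 : IntervalIntegrable (fun m => (Real.sign (x - m) : ℂ) * φ m) volume x N := by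
      rw [intervalIntegrable_iff] at hIφxN ⊢
      have e2 : (fun m => (Real.sign (x - m) : ℂ) * φ m) =ᵐ[volume.restrict (Set.uIoc x N)]
          (fun m => -φ m) := (MeasureTheory.ae_restrict_iff' measurableSet_uIoc).2 hae2
      exact (hIφxN.neg).congr e2.symm
    rw [← intervalIntegral.integral_add_adjacent_intervals hI1 hI2,
      intervalIntegral.integral_congr_ae hae1, intervalIntegral.integral_congr_ae hae2,
      intervalIntegral.integral_neg]
    ring
  rw [hsign]
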